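/- Let L be a divisorial principally generated C-lattice lattice domain, let a ∈ L be a nonzero prime element, and let p be a maximal element of L with a ≤ p. Then ⋀ { b ∈ L | a ≤ b and b ≰ p } = 1; that is, a(p) = 1. -/

import Mathlib

/-- A multiplicative lattice: a complete lattice (bottom `⊥` playing the role of `0`)
which is a commutative monoid whose identity `1` is the top element, and in which
multiplication distributes over arbitrary joins. -/
class MulLattice (L : Type*) extends CompleteLattice L, CommMonoid L where
  one_eq_top : (1 : L) = ⊤
  mul_sSup : ∀ (a : L) (S : Set L), a * sSup S = ⨆ b ∈ S, a * b

namespace MulLattice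

variable {L : Type*} [MulLattice L]

/-- The residual `(y : x) = ⋁ {a | a * x ≤ y}`. -/
def res (y x : L) : L := sSup {a : L | a * x ≤ y}

/-- `x` is meet-principal: `y ⊓ z * x = ((y : x) ⊓ z) * x` for all `y, z`. -/
def IsMeetPrincipal (x : L) : Prop := ∀ y z : L, y ⊓ z * x = (res y x ⊓ z) * x

/-- `x` is join-principal: `y ⊔ (z : x) = ((y * x ⊔ z) : x)` for all `y, z`. -/
def IsJoinPrincipal (x : L) : Prop := ∀ y z : L, y ⊔ res z x = res (y * x ⊔ z) x

/-- `x` is principal if it is both meet-principal and join-principal. -/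
def IsPrincipal (x : L) : Prop := IsMeetPrincipal x ∧ IsJoinPrincipal x

/-- A prime element: a proper element `p` with `x * y ≤ p → x ≤ p ∨ y ≤ p`. -/
def IsPrime (p : L) : Prop := p ≠ 1 ∧ ∀ x y : L, x * y ≤ p → x ≤ p ∨ y ≤ p

/-- A maximal element: an element maximal in `L - {1}`. -/
def IsMaximal (m : L) : Prop := m ≠ 1 ∧ ∀ b : L, m < b → b = 1

end MulLattice

/-- Compact element, with the definition Mathlib used in December 2024: every cover of `k`
by a set `s` has a finite subcover. -/
def CompleteLattice.IsCompactElement {α : Type*} [CompleteLattice α] (k : α) : Prop :=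
  ∀ s : Set α, k ≤ sSup s → ∃ t : Finset α, ↑t ⊆ s ∧ k ≤ t.sup id

/-- A principally generated C-lattice: a multiplicative lattice in which `1` is compact,
compact elements are closed under multiplication, every element is a join of compact
elements and every element is a join of principal elements. -/
class PGCLattice (L : Type*) extends MulLattice L where
  top_isCompact : CompleteLattice.IsCompactElement (⊤ : L)
  compact_mul : ∀ a b : L, CompleteLattice.IsCompactElement a →
    CompleteLattice.IsCompactElement b → CompleteLattice.IsCompactElement (a * b)
  compactly_generated : ∀ a : L,
    a = sSup {c : L | CompleteLattice.IsCompactElement c ∧ c ≤ a}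
  principally_generated : ∀ a : L,
    a = sSup {x : L | MulLattice.IsPrincipal x ∧ x ≤ a}

namespace MulLattice

variable {L : Type*}

/-- A lattice domain: `0 = ⊥` is a prime element. -/
def IsLatticeDomain (L : Type*) [MulLattice L] : Prop := IsPrime (⊥ : L)

variable [PGCLattice L]

open Classical in
/-- The divisorial (`v`-)closure of `a`: equals `(x : (x : a))` for a nonzero principal
`x ≤ a` when such an `x` exists (in a lattice domain this is independent of the choice
of `x`), and `⊥` otherwise (in particular `vclos ⊥ = ⊥`). -/
noncomputable def vclos (a : L) : L :=
  if h : ∃ x : L, IsPrincipal x ∧ x ≠ ⊥ ∧ x ≤ a then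
    res h.choose (res h.choose a)
  else ⊥

/-- `a` is divisorial if `a = a_v`. -/
def IsDivisorial (a : L) : Prop := vclos a = a

/-- `L` is h-local: every nonzero prime is below a unique maximal element and
every nonzero element is below only finitely many maximal elements. -/
def IsHLocal (L : Type*) [PGCLattice L] : Prop :=
  (∀ r : L, r ≠ ⊥ → IsPrime r → ∃! m : L, IsMaximal m ∧ r ≤ m) ∧
  (∀ b : L, b ≠ ⊥ → {m : L | IsMaximal m ∧ b ≤ m}.Finite)

end MulLattice


namespace MulLattice

variable {L : Type*} [MulLattice L]

theorem le_one' (u : L) : u ≤ 1 := by rw [MulLattice.one_eq_top]; exact le_top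

theorem mul_le_mul_left' (a : L) {b c : L} (h : b ≤ c) : a * b ≤ a * c := by
  have key : a * sSup {b, c} = ⨆ x ∈ ({b, c} : Set L), a * x := MulLattice.mul_sSup a {b, c}
  have hsup : sSup ({b, c} : Set L) = c := by rw [sSup_pair, sup_eq_right.mpr h]
  rw [hsup] at key
  rw [key]
  exact le_biSup _ (by simp)

theorem mul_le_mul_right' (a : L) {b c : L} (h : b ≤ c) : b * a ≤ c * a := by
  rw [mul_comm b a, mul_comm c a]; exact mul_le_mul_left' a h

theorem mul_le_left (a b : L) : a * b ≤ a := by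
  have h := mul_le_mul_left' a (le_one' b)
  rwa [mul_one] at h

theorem mul_le_right (a b : L) : a * b ≤ b := by rw [mul_comm]; exact mul_le_left b a

theorem mul_sup (a b c : L) : a * (b ⊔ c) = a * b ⊔ a * c := by
  have key : a * sSup {b, c} = ⨆ x ∈ ({b, c} : Set L), a * x := MulLattice.mul_sSup a {b, c}
  rw [sSup_pair] at key
  rw [key]
  rw [iSup_pair]

theorem sup_mul (a b c : L) : (a ⊔ b) * c = a * c ⊔ b * c := by
  rw [mul_comm, mul_sup, mul_comm c a, mul_comm c b]

theorem res_mul_le (y x : L) : res y x * x ≤ y := by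
  rw [res, mul_comm, MulLattice.mul_sSup]
  exact iSup₂_le (fun a ha => by rw [mul_comm]; exact ha)

theorem le_res {a y x : L} (h : a * x ≤ y) : a ≤ res y x := le_sSup h

theorem le_res_iff {a y x : L} : a ≤ res y x ↔ a * x ≤ y := by
  constructor
  · intro h
    have h1 : a * x ≤ res y x * x := mul_le_mul_right' x h
    exact h1.trans (res_mul_le y x)
  · exact le_res

theorem res_le_res_left {y y' : L} (x : L) (h : y ≤ y') : res y x ≤ res y' x :=
  sSup_le fun a ha => le_sSup (le_trans ha h)

theorem res_anti {x x' : L} (y : L) (h : x ≤ x') : res y x' ≤ res y x :=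
  sSup_le fun a ha => le_sSup (le_trans (mul_le_mul_left' a h) ha)

theorem self_le_res (y x : L) : y ≤ res y x := le_res (mul_le_left y x)

theorem res_self (x : L) : res x x = 1 :=
  le_antisymm (le_one' _) (le_res (by rw [one_mul]))

theorem res_eq_one_iff {y x : L} : res y x = 1 ↔ x ≤ y := by
  constructor
  · intro h
    have : (1 : L) ≤ res y x := le_of_eq h.symm
    have := le_res_iff.mp this
    rwa [one_mul] at this
  · intro h
    refine le_antisymm (le_one' _) (le_res ?_)
    rwa [one_mul]

/-- residual of a sSup is the inf of residuals -/
theorem res_sSup (x : L) (S : Set L) : res x (sSup S) = ⨅ s ∈ S, res x s := by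
  apply le_antisymm
  · exact le_iInf₂ fun s hs => res_anti x (le_sSup hs)
  · apply le_res
    rw [MulLattice.mul_sSup]
    exact iSup₂_le fun s hs => le_res_iff.mp (biInf_le _ hs)

/-- every maximal element is prime -/
theorem IsMaximal.isPrime {p : L} (hp : IsMaximal p) : IsPrime p := by
  refine ⟨hp.1, fun u v huv => ?_⟩
  by_cases hu : u ≤ p
  · exact Or.inl hu
  · right
    have hlt : p < u ⊔ p := lt_of_le_of_ne le_sup_right (fun h => hu (h ▸ le_sup_left))
    have h1 : u ⊔ p = 1 := hp.2 _ hlt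
    calc v = v * 1 := (mul_one v).symm
      _ = v * (u ⊔ p) := by rw [h1]
      _ = v * u ⊔ v * p := mul_sup v u p
      _ ≤ p ⊔ p := sup_le_sup (by rwa [mul_comm]) (mul_le_right v p)
      _ = p := sup_idem p


section Domain

variable (hdom : IsPrime (⊥ : L))

include hdom

/-- in a domain, res ⊥ z = ⊥ for z ≠ ⊥ -/
theorem res_bot {z : L} (hz : z ≠ ⊥) : res (⊥ : L) z = ⊥ := by
  refine le_antisymm (sSup_le fun α hα => ?_) bot_le
  rcases hdom.2 α z hα with h | h
  · exact h
  · exact absurd (le_antisymm h bot_le) hz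

/-- cancellation for principal nonzero elements: res (z*w) w = z -/
theorem res_mul_self {w : L} (hw : IsPrincipal w) (hw0 : w ≠ ⊥) (z : L) :
    res (z * w) w = z := by
  have h := hw.2 z ⊥
  rw [res_bot hdom hw0, sup_bot_eq, sup_bot_eq] at h
  exact h.symm

/-- cancellation: A * w ≤ B * w → A ≤ B, for principal nonzero w -/
theorem le_of_mul_le_mul {w A B : L} (hw : IsPrincipal w) (hw0 : w ≠ ⊥)
    (h : A * w ≤ B * w) : A ≤ B := by
  have : A ≤ res (B * w) w := le_res h
  rwa [res_mul_self hdom hw hw0] at this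

end Domain

/-- meet-principal division: d ≤ z → d = res d z * z -/
theorem eq_res_mul {z d : L} (hz : IsMeetPrincipal z) (h : d ≤ z) :
    d = res d z * z := by
  have key := hz d 1
  rw [one_mul] at key
  rw [inf_eq_left.mpr h] at key
  have h1 : res d z ⊓ 1 = res d z := inf_eq_left.mpr (le_one' _)
  rwa [h1] at key

section Steps

variable (hdom : IsPrime (⊥ : L))

include hdom

/-- Step A : for principal nonzero w ≤ e and principal nonzero z :
    res (w*z) e = z * res w e -/
theorem res_mul_eq {w z e : L} (hw : IsPrincipal w) (hw0 : w ≠ ⊥)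
    (hz : IsPrincipal z) (hz0 : z ≠ ⊥) (hwe : w ≤ e) :
    res (w * z) e = z * res w e := by
  apply le_antisymm
  · apply sSup_le
    intro d hd
    -- hd : d * e ≤ w * z
    have hdw : d * w ≤ w * z := le_trans (mul_le_mul_left' d hwe) hd
    have hdz : d ≤ z := by
      have : d ≤ res (z * w) w := le_res (by rwa [mul_comm z w])
      rwa [res_mul_self hdom hw hw0] at this
    have hfact : d = res d z * z := eq_res_mul hz.1 hdz
    have h2 : (res d z * e) * z ≤ w * z := by
      calc (res d z * e) * z = (res d z * z) * e := mul_right_comm _ _ _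
        _ = d * e := by rw [← hfact]
        _ ≤ w * z := hd
    have h3 : res d z * e ≤ w := le_of_mul_le_mul hdom hz hz0 h2
    have h4 : res d z ≤ res w e := le_res h3
    calc d = res d z * z := hfact
      _ ≤ res w e * z := mul_le_mul_right' z h4
      _ = z * res w e := mul_comm _ _
  · apply le_res
    calc z * res w e * e = z * (res w e * e) := mul_assoc _ _ _
      _ ≤ z * w := mul_le_mul_left' z (res_mul_le w e)
      _ = w * z := mul_comm z w

/-- Step B : res (w*z) (z*A) = res w A for principal nonzero z -/
theorem res_mul_mul {w z A : L} (hz : IsPrincipal z) (hz0 : z ≠ ⊥) :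
    res (w * z) (z * A) = res w A := by
  unfold res
  congr 1
  ext ρ
  simp only [Set.mem_setOf_eq]
  constructor
  · intro h
    have h1 : (ρ * A) * z ≤ w * z := by
      calc (ρ * A) * z = ρ * (z * A) := by rw [mul_assoc, mul_comm A z]
        _ ≤ w * z := h
    exact le_of_mul_le_mul hdom hz hz0 h1
  · intro h
    calc ρ * (z * A) = (ρ * A) * z := by rw [mul_assoc, mul_comm A z]
      _ ≤ w * z := mul_le_mul_right' z h

end Steps

end MulLattice

namespace MulLattice

variable {L : Type*} [PGCLattice L]

/-- generic: from a sSup-generation, find a generator escaping v -/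
theorem exists_gen_not_le {P : L → Prop} {e v : L}
    (hgen : e = sSup {y : L | P y ∧ y ≤ e}) (hev : ¬ e ≤ v) :
    ∃ y : L, P y ∧ y ≤ e ∧ ¬ y ≤ v := by
  by_contra h
  push_neg at h
  apply hev
  rw [hgen]
  exact sSup_le fun y hy => h y hy.1 hy.2

theorem exists_principal_not_le {e v : L} (hev : ¬ e ≤ v) :
    ∃ y : L, IsPrincipal y ∧ y ≤ e ∧ ¬ y ≤ v :=
  exists_gen_not_le (PGCLattice.principally_generated e) hev

theorem exists_compact_not_le {e v : L} (hev : ¬ e ≤ v) :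
    ∃ y : L, CompleteLattice.IsCompactElement y ∧ y ≤ e ∧ ¬ y ≤ v :=
  exists_gen_not_le (PGCLattice.compactly_generated e) hev

/-- THE double-residual identity: independence of the denominator.
    If every element is divisorial, x is a nonzero principal with x ≤ e,
    then res x (res x e) = e.  -/
theorem res_res_eq (hdom : IsPrime (⊥ : L)) (hdiv : ∀ a : L, IsDivisorial a)
    {x e : L} (hx : IsPrincipal x) (hx0 : x ≠ ⊥) (hxe : x ≤ e) :
    res x (res x e) = e := by
  have hex : ∃ y : L, IsPrincipal y ∧ y ≠ ⊥ ∧ y ≤ e := ⟨x, hx, hx0, hxe⟩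
  have hstep := hdiv e
  rw [IsDivisorial, vclos, dif_pos hex] at hstep
  set x₀ := hex.choose with hx₀def
  obtain ⟨hx₀p, hx₀0, hx₀e⟩ := hex.choose_spec
  -- hstep : res x₀ (res x₀ e) = e
  -- key : res (x*x₀) (res (x*x₀) e) equals both sides
  have hA1 : res (x * x₀) e = x₀ * res x e := res_mul_eq hdom hx hx0 hx₀p hx₀0 hxe
  have hA2 : res (x₀ * x) e = x * res x₀ e := res_mul_eq hdom hx₀p hx₀0 hx hx0 hx₀e
  have hcomm : res (x * x₀) e = res (x₀ * x) e := by rw [mul_comm]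
  have hB1 : res (x * x₀) (x₀ * res x e) = res x (res x e) := res_mul_mul hdom hx₀p hx₀0
  have hB2 : res (x₀ * x) (x * res x₀ e) = res x₀ (res x₀ e) := res_mul_mul hdom hx hx0
  calc res x (res x e) = res (x * x₀) (x₀ * res x e) := hB1.symm
    _ = res (x * x₀) (res (x * x₀) e) := by rw [hA1]
    _ = res (x₀ * x) (res (x₀ * x) e) := by rw [mul_comm x x₀]
    _ = res (x₀ * x) (x * res x₀ e) := by rw [hA2]
    _ = res x₀ (res x₀ e) := hB2
    _ = e := hstep


end MulLattice

theorem exists_minimal_of_chains_bddBelow {α : Type*} [PartialOrder α] (s : Set α)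
    (ih : ∀ c ⊆ s, IsChain (· ≤ ·) c → ∀ y ∈ c, ∃ lb ∈ s, ∀ z ∈ c, lb ≤ z)
    (x : α) (hxs : x ∈ s) :
    ∃ m ∈ s, m ≤ x ∧ ∀ z ∈ s, z ≤ m → z = m := by
  have ih' : ∀ c ⊆ (OrderDual.ofDual ⁻¹' s : Set αᵒᵈ), IsChain (· ≤ ·) c →
      ∀ y ∈ c, ∃ ub ∈ (OrderDual.ofDual ⁻¹' s : Set αᵒᵈ), ∀ z ∈ c, z ≤ ub := by
    intro c hcs hc y hy
    obtain ⟨lb, hlbs, hlb⟩ := ih (OrderDual.ofDual '' c)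
      (fun t ht => by obtain ⟨u, hu, rfl⟩ := ht; exact hcs hu)
      (by
        rintro t1 ⟨u1, hu1, rfl⟩ t2 ⟨u2, hu2, rfl⟩ hne
        rcases hc hu1 hu2 (fun h => hne (congrArg OrderDual.ofDual h)) with h | h
        · exact Or.inr h
        · exact Or.inl h)
      (OrderDual.ofDual y) ⟨y, hy, rfl⟩
    exact ⟨OrderDual.toDual lb, hlbs, fun z hz => hlb (OrderDual.ofDual z) ⟨z, hz, rfl⟩⟩
  obtain ⟨m, hm1, hm2⟩ := zorn_le_nonempty₀ (α := αᵒᵈ) (OrderDual.ofDual ⁻¹' s)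
    ih' (OrderDual.toDual x) hxs
  refine ⟨OrderDual.ofDual m, hm2.1, hm1, fun z hz hzm => ?_⟩
  exact le_antisymm hzm (hm2.2 (y := OrderDual.toDual z) hz hzm)



open MulLattice

theorem stmt13 {L : Type*} [PGCLattice L] (hL : IsLatticeDomain L)
    (hdiv : ∀ a : L, IsDivisorial a)
    (a p : L) (ha0 : a ≠ ⊥) (ha : IsPrime a) (hp : IsMaximal p) (hap : a ≤ p) :
    sInf {b : L | a ≤ b ∧ ¬ b ≤ p} = 1 := by
  have hdom : IsPrime (⊥ : L) := hL
  have key : ∀ b : L, a ≤ b → ¬ b ≤ p → b = 1 := by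
    intro b hab hbp
    -- fix a nonzero principal x ≤ a
    have hanb : ¬ a ≤ (⊥ : L) := fun h => ha0 (le_antisymm h bot_le)
    obtain ⟨x, hxpr, hxa, hxb0⟩ := exists_principal_not_le hanb
    have hx0 : x ≠ ⊥ := fun h => hxb0 (le_of_eq h)
    have RR : ∀ e : L, x ≤ e → res x (res x e) = e := fun e he =>
      res_res_eq hdom hdiv hxpr hx0 he
    have hpprime : IsPrime p := hp.isPrime
    have hxp : x ≤ p := hxa.trans hap
    -- the atom c = (x : p)
    set c := res x p with hcdef
    have hxc : x ≤ c := le_res (mul_le_left x p)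
    have hcp : res x c = p := RR p hxp
    have hcnex : ¬ c ≤ x := by
      intro h
      have h1 : (1 : L) ≤ res x c := by
        rw [← res_self x]; exact res_anti x h
      exact hp.1 (le_antisymm (le_one' p) (hcp ▸ h1))
    have atom : ∀ W : L, x ≤ W → W ≤ c → ¬ W ≤ x → W = c := by
      intro W hxW hWc hWx
      have h1 : p ≤ res x W := by rw [← hcp]; exact res_anti x hWc
      have h2 : res x W ≠ 1 := fun h => hWx (res_eq_one_iff.mp h)
      have h3 : res x W = p :=
        by_contra fun hne => h2 (hp.2 _ (lt_of_le_of_ne h1 (Ne.symm hne)))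
      calc W = res x (res x W) := (RR W hxW).symm
        _ = res x p := by rw [h3]
        _ = c := rfl
    -- the set T and Zorn
    set T : Set L := {V | a ≤ V ∧ V ≤ b ∧ ¬ V ≤ p} with hTdef
    have hbT : b ∈ T := ⟨hab, le_rfl, hbp⟩
    have chainlb : ∀ C ⊆ T, IsChain (· ≤ ·) C → ∀ y ∈ C, ∃ lb ∈ T, ∀ z ∈ C, lb ≤ z := by
      intro C hCT hC y hy
      refine ⟨sInf C, ⟨le_sInf fun V hV => (hCT hV).1, (sInf_le hy).trans (hCT hy).2.1, ?_⟩,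
        fun z hz => sInf_le hz⟩
      -- the divisoriality/compactness argument : ¬ sInf C ≤ p
      intro hinf
      set D := sSup ((fun V => res x V) '' C) with hDdef
      have hxD : x ≤ D := le_trans (le_res (mul_le_left x y)) (le_sSup ⟨y, hy, rfl⟩)
      have hresD : res x D = sInf C := by
        rw [hDdef, res_sSup]
        apply le_antisymm
        · apply le_sInf; intro V hV
          have hrr : res x (res x V) = V := RR V (hxa.trans (hCT hV).1)
          have : ⨅ s ∈ (fun V => res x V) '' C, res x s ≤ res x (res x V) :=
            biInf_le _ ⟨V, hV, rfl⟩
          rwa [hrr] at this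
        · apply le_iInf₂; rintro s ⟨V, hV, rfl⟩
          rw [RR V (hxa.trans (hCT hV).1)]
          exact sInf_le hV
      have hcD : c ≤ D := by
        have h1 : c * sInf C ≤ x :=
          le_trans (mul_le_mul_left' c hinf) (res_mul_le x p)
        have h2 : c ≤ res x (sInf C) := le_res h1
        rw [← hresD] at h2
        rwa [RR D hxD] at h2
      obtain ⟨κ, hκcpt, hκc, hκx⟩ := exists_compact_not_le hcnex
      have hchain' : IsChain (· ≤ ·) ((fun V => res x V) '' C) := by
        rintro _ ⟨V1, hV1, rfl⟩ _ ⟨V2, hV2, rfl⟩ hne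
        rcases eq_or_ne V1 V2 with rfl | hne2
        · exact absurd rfl hne
        · rcases hC hV1 hV2 hne2 with h | h
          · exact Or.inr (res_anti x h)
          · exact Or.inl (res_anti x h)
      obtain ⟨t, ⟨V₀, hV₀, rfl⟩, hκt⟩ :=
        (CompleteLattice.isCompactElement_iff_le_of_directed_sSup_le L κ).mp
          ((CompleteLattice.isCompactElement_iff_exists_le_sSup_of_le_sSup L κ).mpr hκcpt)
          ((fun V => res x V) '' C) ⟨res x y, ⟨y, hy, rfl⟩⟩ hchain'.directedOn
          (hκc.trans hcD)
      have hW : x ⊔ κ = c :=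
        atom _ le_sup_left (sup_le hxc hκc) (fun h => hκx (le_sup_right.trans h))
      have hcV₀ : c ≤ res x V₀ := by
        rw [← hW]; exact sup_le (le_res (mul_le_left x V₀)) hκt
      have hV₀p : V₀ ≤ p := by
        calc V₀ = res x (res x V₀) := (RR V₀ (hxa.trans (hCT hV₀).1)).symm
          _ ≤ res x c := res_anti x hcV₀
          _ = p := hcp
      exact (hCT hV₀).2.2 hV₀p
    obtain ⟨b₀, hb₀T, hb₀b, hb₀min⟩ := exists_minimal_of_chains_bddBelow T chainlb b hbT
    -- a principal η ≤ b₀ with η ≰ p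
    obtain ⟨η, hηpr, hηb₀, hηp⟩ := exists_principal_not_le hb₀T.2.2
    have hVT : a ⊔ η * η ∈ T := by
      refine ⟨le_sup_left, (sup_le hb₀T.1 ((mul_le_left η η).trans hηb₀)).trans hb₀b, ?_⟩
      intro h
      have hη2 : η * η ≤ p := le_sup_right.trans h
      rcases hpprime.2 η η hη2 with h' | h' <;> exact hηp h'
    have hVle : a ⊔ η * η ≤ b₀ := sup_le hb₀T.1 ((mul_le_left η η).trans hηb₀)
    have hV : a ⊔ η * η = b₀ := hb₀min _ hVT hVle
    have hηV : η ≤ a ⊔ η * η := hV ▸ hηb₀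
    have hηa : ¬ η ≤ a := fun h => hηp (h.trans hap)
    have hresa : res a η = a := by
      apply le_antisymm
      · apply sSup_le; intro ρ hρ
        rcases ha.2 ρ η hρ with h | h
        · exact h
        · exact absurd h hηa
      · exact le_res (mul_le_left a η)
    have hjp := hηpr.2 η a
    rw [hresa] at hjp
    have hRHS : res (η * η ⊔ a) η = 1 :=
      res_eq_one_iff.mpr (by rwa [sup_comm] at hηV)
    rw [hRHS] at hjp
    have h1b : (1 : L) ≤ b := by
      calc (1 : L) = η ⊔ a := hjp.symm
        _ ≤ b₀ := sup_le hηb₀ hb₀T.1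
        _ ≤ b := hb₀b
    exact le_antisymm (le_one' b) h1b
  apply le_antisymm (le_one' _)
  exact le_sInf fun b hb => (key b hb.1 hb.2).ge
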